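/- Let X, Y, Z be random variables taking values in Borel (standard Borel) spaces such that (X,Y) and (X,Z) have the same joint distribution and σ(Y) ⊆ σ(Z). Then X and Z are conditionally independent given Y. -/

import Mathlib

open ProbabilityTheory MeasureTheory

/-- If `(X,Y) =ᵈ (X,Z)` and `σ(Y) ⊆ σ(Z)`, then `X` and `Z` are conditionally
independent given `Y`. -/
theorem stmt1 {Ω α β : Type*} {mΩ : MeasurableSpace Ω} [StandardBorelSpace Ω]
    {mα : MeasurableSpace α} {mβ : MeasurableSpace β}
    [StandardBorelSpace α] [StandardBorelSpace β]
    (μ : Measure Ω) [IsProbabilityMeasure μ]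
    (X : Ω → α) (Y Z : Ω → β)
    (hX : Measurable X) (hY : Measurable Y) (hZ : Measurable Z)
    (hdist : μ.map (fun ω => (X ω, Y ω)) = μ.map (fun ω => (X ω, Z ω)))
    (hsub : MeasurableSpace.comap Y mβ ≤ MeasurableSpace.comap Z mβ) :
    CondIndepFun (MeasurableSpace.comap Y mβ) (hY.comap_le) X Z μ := by
  haveI hΩne : Nonempty Ω := μ.nonempty_of_neZero
  haveI hαne : Nonempty α := ⟨X hΩne.some⟩
  have hm : (MeasurableSpace.comap Y mβ) ≤ mΩ := hY.comap_le
  have hmZle : (MeasurableSpace.comap Z mβ) ≤ mΩ := hZ.comap_le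
  -- swapped joint laws agree
  have hswap : μ.map (fun ω => (Y ω, X ω)) = μ.map (fun ω => (Z ω, X ω)) := by
    calc μ.map (fun ω => (Y ω, X ω))
        = (μ.map (fun ω => (X ω, Y ω))).map Prod.swap := by
          rw [Measure.map_map measurable_swap (hX.prodMk hY)]; rfl
      _ = (μ.map (fun ω => (X ω, Z ω))).map Prod.swap := by rw [hdist]
      _ = μ.map (fun ω => (Z ω, X ω)) := by
          rw [Measure.map_map measurable_swap (hX.prodMk hZ)]; rfl
  have hYZ : μ.map Y = μ.map Z := by
    calc μ.map Y
        = (μ.map (fun ω => (Y ω, X ω))).map Prod.fst := by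
          rw [Measure.map_map measurable_fst (hY.prodMk hX)]; rfl
      _ = (μ.map (fun ω => (Z ω, X ω))).map Prod.fst := by rw [hswap]
      _ = μ.map Z := by
          rw [Measure.map_map measurable_fst (hZ.prodMk hX)]; rfl
  have hker : condDistrib X Y μ = condDistrib X Z μ := by
    rw [condDistrib_def, condDistrib_def]
    congr 1
  rw [condIndepFun_iff_condExp_inter_preimage_eq_mul hX hZ]
  intro s t hs ht
  -- the Doob-Dynkin factor
  set h : β → ℝ := fun b => (condDistrib X Y μ b s).toReal with hh_def
  have hh_meas : Measurable h := (Kernel.measurable_coe _ hs).ennreal_toReal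
  have hh01 : ∀ b, 0 ≤ h b ∧ h b ≤ 1 := fun b =>
    ⟨ENNReal.toReal_nonneg, by
      have h1 : condDistrib X Y μ b s ≤ 1 := prob_le_one
      simpa using ENNReal.toReal_mono ENNReal.one_ne_top h1⟩
  set u : Ω → ℝ := fun ω => h (Y ω) with hu_def
  set v : Ω → ℝ := fun ω => h (Z ω) with hv_def
  have hu_m : Measurable[(MeasurableSpace.comap Y mβ)] u := hh_meas.comp (Measurable.of_comap_le le_rfl)
  have hv_mZ : Measurable[(MeasurableSpace.comap Z mβ)] v := hh_meas.comp (Measurable.of_comap_le le_rfl)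
  have hu_mZ : Measurable[(MeasurableSpace.comap Z mβ)] u := hu_m.mono hsub le_rfl
  have hu : Measurable u := hu_m.mono hm le_rfl
  have hv : Measurable v := hv_mZ.mono hmZle le_rfl
  have hu_eq : u =ᵐ[μ] μ⟦X ⁻¹' s | (MeasurableSpace.comap Y mβ)⟧ := condDistrib_ae_eq_condExp hY hX hs
  have hv_eq : v =ᵐ[μ] μ⟦X ⁻¹' s | (MeasurableSpace.comap Z mβ)⟧ := by
    have := condDistrib_ae_eq_condExp (μ := μ) hZ hX hs
    rw [← hker] at this
    exact this
  -- integrability of bounded measurable functions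
  have hint : ∀ {f : Ω → ℝ}, Measurable f → (∀ ω, |f ω| ≤ 4) → Integrable f μ := by
    intro f hf hb
    exact ⟨hf.aestronglyMeasurable, HasFiniteIntegral.of_bounded (C := 4)
      (Filter.Eventually.of_forall fun ω => by simpa [Real.norm_eq_abs] using hb ω)⟩
  have habs : ∀ ω, |u ω| ≤ 1 := fun ω => abs_le.2 ⟨by linarith [(hh01 (Y ω)).1], (hh01 (Y ω)).2⟩
  have habsv : ∀ ω, |v ω| ≤ 1 := fun ω => abs_le.2 ⟨by linarith [(hh01 (Z ω)).1], (hh01 (Z ω)).2⟩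
  set g : Ω → ℝ := (X ⁻¹' s).indicator (fun _ => (1 : ℝ)) with hg_def
  have hg_meas : Measurable g := measurable_const.indicator (hX hs)
  have hg_abs : ∀ ω, |g ω| ≤ 1 := fun ω => by
    by_cases hω : ω ∈ X ⁻¹' s <;> simp [hg_def, Set.indicator, hω]
  have hg_int : Integrable g μ := hint hg_meas fun ω => (hg_abs ω).trans (by norm_num)
  -- cross and square integrals
  have huv_int : Integrable (u * v) μ := hint (hu.mul hv) fun ω => by
    calc |(u * v) ω| = |u ω| * |v ω| := abs_mul _ _
      _ ≤ 1 * 1 := mul_le_mul (habs ω) (habsv ω) (abs_nonneg _) zero_le_one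
      _ ≤ 4 := by norm_num
  have huu_int : Integrable (u * u) μ := hint (hu.mul hu) fun ω => by
    calc |(u * u) ω| = |u ω| * |u ω| := abs_mul _ _
      _ ≤ 1 * 1 := mul_le_mul (habs ω) (habs ω) (abs_nonneg _) zero_le_one
      _ ≤ 4 := by norm_num
  have hvv_int : Integrable (v * v) μ := hint (hv.mul hv) fun ω => by
    calc |(v * v) ω| = |v ω| * |v ω| := abs_mul _ _
      _ ≤ 1 * 1 := mul_le_mul (habsv ω) (habsv ω) (abs_nonneg _) zero_le_one
      _ ≤ 4 := by norm_num
  have hug_int : Integrable (u * g) μ := hint (hu.mul hg_meas) fun ω => by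
    calc |(u * g) ω| = |u ω| * |g ω| := abs_mul _ _
      _ ≤ 1 * 1 := mul_le_mul (habs ω) (hg_abs ω) (abs_nonneg _) zero_le_one
      _ ≤ 4 := by norm_num
  -- transport: ∫ v² = ∫ u²
  have hvv_eq_huu : ∫ ω, (v * v) ω ∂μ = ∫ ω, (u * u) ω ∂μ := by
    have h2 : Measurable fun b => h b * h b := hh_meas.mul hh_meas
    calc ∫ ω, (v * v) ω ∂μ = ∫ b, h b * h b ∂(μ.map Z) := by
          rw [integral_map hZ.aemeasurable h2.aestronglyMeasurable]; rfl
      _ = ∫ b, h b * h b ∂(μ.map Y) := by rw [hYZ]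
      _ = ∫ ω, (u * u) ω ∂μ := by
          rw [integral_map hY.aemeasurable h2.aestronglyMeasurable]; rfl
  -- ∫ u·v = ∫ u·g and ∫ u·u = ∫ u·g
  have key_int : ∀ (m' : MeasurableSpace Ω) (hm' : m' ≤ mΩ) (w : Ω → ℝ),
      Measurable[m'] u → Integrable (u * w) μ → (w =ᵐ[μ] μ[g | m']) →
      ∫ ω, (u * w) ω ∂μ = ∫ ω, (u * g) ω ∂μ := by
    intro m' hm' w hu' huw hw
    calc ∫ ω, (u * w) ω ∂μ = ∫ ω, (u * μ[g | m']) ω ∂μ := by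
          refine integral_congr_ae ?_
          filter_upwards [hw] with ω hω
          simp only [Pi.mul_apply, hω]
      _ = ∫ ω, (μ[u * g | m']) ω ∂μ := by
          refine (integral_congr_ae ?_).symm
          exact condExp_mul_of_stronglyMeasurable_left (hu'.stronglyMeasurable) hug_int hg_int
      _ = ∫ ω, (u * g) ω ∂μ := integral_condExp hm'
  have huv_eq : ∫ ω, (u * v) ω ∂μ = ∫ ω, (u * g) ω ∂μ :=
    key_int (MeasurableSpace.comap Z mβ) hmZle v hu_mZ huv_int hv_eq
  have huu_eq : ∫ ω, (u * u) ω ∂μ = ∫ ω, (u * g) ω ∂μ :=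
    key_int (MeasurableSpace.comap Y mβ) hm u hu_m huu_int hu_eq
  -- u = v almost everywhere
  have key : u =ᵐ[μ] v := by
    have hsq_int : Integrable (fun ω => (u ω - v ω) ^ 2) μ := by
      refine hint ((hu.sub hv).pow_const 2) fun ω => ?_
      have h1 : |u ω - v ω| ≤ 2 := by
        calc |u ω - v ω| ≤ |u ω| + |v ω| := abs_sub _ _
          _ ≤ 2 := by linarith [habs ω, habsv ω]
      calc |(u ω - v ω) ^ 2| = |u ω - v ω| ^ 2 := by rw [abs_pow]
        _ ≤ 2 ^ 2 := by
            exact pow_le_pow_left₀ (abs_nonneg _) h1 2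
        _ = 4 := by norm_num
    have hzero : ∫ ω, (u ω - v ω) ^ 2 ∂μ = 0 := by
      have huu' : Integrable (fun ω => u ω * u ω) μ := huu_int
      have hvv' : Integrable (fun ω => v ω * v ω) μ := hvv_int
      have huv2 : Integrable (fun ω => 2 * (u ω * v ω)) μ := huv_int.const_mul 2
      have hF : Integrable (fun ω => u ω * u ω - 2 * (u ω * v ω)) μ := huu'.sub huv2
      have e1 : ∫ ω, (u ω - v ω) ^ 2 ∂μ
          = ∫ ω, (u ω * u ω - 2 * (u ω * v ω) + v ω * v ω) ∂μ :=
        integral_congr_ae (Filter.Eventually.of_forall fun ω => by ring)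
      have b1 : ∫ ω, u ω * u ω ∂μ = ∫ ω, (u * g) ω ∂μ := huu_eq
      have b2 : ∫ ω, u ω * v ω ∂μ = ∫ ω, (u * g) ω ∂μ := huv_eq
      have b3 : ∫ ω, v ω * v ω ∂μ = ∫ ω, u ω * u ω ∂μ := hvv_eq_huu
      rw [e1, integral_add hF hvv', integral_sub huu' huv2, integral_const_mul]
      rw [b3, b1, b2]
      ring
    have := (integral_eq_zero_iff_of_nonneg (fun ω => sq_nonneg (u ω - v ω)) hsq_int).1 hzero
    filter_upwards [this] with ω hω
    have : (u ω - v ω) ^ 2 = 0 := hω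
    have := pow_eq_zero_iff (n := 2) (by norm_num) |>.1 this
    linarith [sub_eq_zero.1 this]
  -- final computation
  set k : Ω → ℝ := (Z ⁻¹' t).indicator (fun _ => (1 : ℝ)) with hk_def
  have hk_measZ : Measurable[(MeasurableSpace.comap Z mβ)] k :=
    measurable_const.indicator (⟨t, ht, rfl⟩ : MeasurableSet[(MeasurableSpace.comap Z mβ)] (Z ⁻¹' t))
  have hk_meas : Measurable k := hk_measZ.mono hmZle le_rfl
  have hk_abs : ∀ ω, |k ω| ≤ 1 := fun ω => by
    by_cases hω : ω ∈ Z ⁻¹' t <;> simp [hk_def, Set.indicator, hω]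
  have hk_int : Integrable k μ := hint hk_meas fun ω => (hk_abs ω).trans (by norm_num)
  have hkg_int : Integrable (k * g) μ := hint (hk_meas.mul hg_meas) fun ω => by
    calc |(k * g) ω| = |k ω| * |g ω| := abs_mul _ _
      _ ≤ 1 * 1 := mul_le_mul (hk_abs ω) (hg_abs ω) (abs_nonneg _) zero_le_one
      _ ≤ 4 := by norm_num
  have huk_int : Integrable (u * k) μ := hint (hu.mul hk_meas) fun ω => by
    calc |(u * k) ω| = |u ω| * |k ω| := abs_mul _ _
      _ ≤ 1 * 1 := mul_le_mul (habs ω) (hk_abs ω) (abs_nonneg _) zero_le_one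
      _ ≤ 4 := by norm_num
  have hind : (X ⁻¹' s ∩ Z ⁻¹' t).indicator (fun _ => (1 : ℝ)) = k * g := by
    funext ω
    by_cases h1 : ω ∈ X ⁻¹' s <;> by_cases h2 : ω ∈ Z ⁻¹' t <;>
      simp [hk_def, hg_def, Set.indicator, h1, h2]
  -- conditional expectation given (MeasurableSpace.comap Z mβ)
  have step1 : μ⟦X ⁻¹' s ∩ Z ⁻¹' t | (MeasurableSpace.comap Z mβ)⟧ =ᵐ[μ] u * k := by
    calc μ⟦X ⁻¹' s ∩ Z ⁻¹' t | (MeasurableSpace.comap Z mβ)⟧ = μ[k * g | (MeasurableSpace.comap Z mβ)] := by rw [hind]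
      _ =ᵐ[μ] k * μ[g | (MeasurableSpace.comap Z mβ)] :=
          condExp_mul_of_stronglyMeasurable_left hk_measZ.stronglyMeasurable hkg_int hg_int
      _ =ᵐ[μ] u * k := by
          filter_upwards [hv_eq, key] with ω h1 h2
          simp only [Pi.mul_apply, ← h1, ← h2, mul_comm]
  -- tower property
  calc μ⟦X ⁻¹' s ∩ Z ⁻¹' t | (MeasurableSpace.comap Y mβ)⟧
      =ᵐ[μ] μ[μ⟦X ⁻¹' s ∩ Z ⁻¹' t | (MeasurableSpace.comap Z mβ)⟧ | (MeasurableSpace.comap Y mβ)] := (condExp_condExp_of_le hsub hmZle).symm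
    _ =ᵐ[μ] μ[u * k | (MeasurableSpace.comap Y mβ)] := condExp_congr_ae step1
    _ =ᵐ[μ] u * μ[k | (MeasurableSpace.comap Y mβ)] :=
        condExp_mul_of_stronglyMeasurable_left hu_m.stronglyMeasurable huk_int hk_int
    _ =ᵐ[μ] fun ω => (μ⟦X ⁻¹' s | (MeasurableSpace.comap Y mβ)⟧) ω * (μ⟦Z ⁻¹' t | (MeasurableSpace.comap Y mβ)⟧) ω := by
        filter_upwards [hu_eq] with ω hω
        simp only [Pi.mul_apply, hω]
        rfl
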